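/- Let T be a tree of order n with distinct edges e_a, e_b, and suppose θ_T(e_a) = (n−i, i) and θ_T(e_b) = (n−k, k) with i ≥ k. Then θ_T({e_a, e_b}) equals the decreasing rearrangement of (n−i, i−k, k) if and only if e_a and e_b attract. -/

import Mathlib

open SimpleGraph

/-- The multiset of sizes of the connected components of `G`. -/
noncomputable def componentSizes {V : Type*} [Finite V] (G : SimpleGraph V) : Multiset ℕ :=
  haveI : Fintype G.ConnectedComponent := Fintype.ofFinite _
  (Finset.univ : Finset G.ConnectedComponent).val.map fun c => c.supp.ncard

/-- `theta T S` is the partition (as a multiset) of `|V|` whose parts are the sizes of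
the connected components of `T` with the edges of `S` removed. -/
noncomputable def theta {V : Type*} [Finite V] (T : SimpleGraph V) (S : Set (Sym2 V)) :
    Multiset ℕ := componentSizes (T.deleteEdges S)

/-- The weight of a vertex `v` of a tree `T`: the maximal number of edges of a subtree
of `T` containing `v` as a leaf; equivalently, the maximal number of vertices of a
connected component of `T - v`. -/
noncomputable def weight {V : Type*} [Finite V] (T : SimpleGraph V) (v : V) : ℕ :=
  sSup (Set.range fun c : ((⊤ : T.Subgraph).deleteVerts {v}).coe.ConnectedComponent =>
    c.supp.ncard)

/-- The centroid of `T`: the set of vertices of minimal weight. -/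
def centroid {V : Type*} [Finite V] (T : SimpleGraph V) : Set V :=
  {v | ∀ u, weight T v ≤ weight T u}

/-- Two edges of `T` attract if some path in `T` contains both of them and has a
centroid of `T` as one endpoint. -/
def Attract {V : Type*} [Finite V] (T : SimpleGraph V) (ea eb : Sym2 V) : Prop :=
  ∃ (c x : V) (p : T.Walk c x), c ∈ centroid T ∧ p.IsPath ∧ ea ∈ p.edges ∧ eb ∈ p.edges

section Aux

variable {V : Type*}

/-- First-hit lemma: a walk in `H` either survives edge deletion, or its start can reach
an endpoint of a deleted edge in the deleted graph. -/
lemma reach_or_hit (H : SimpleGraph V) (S : Set (Sym2 V)) {x y : V} (p : H.Walk x y) :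
    (H.deleteEdges S).Reachable x y ∨
      ∃ a b, s(a, b) ∈ S ∧ (H.deleteEdges S).Reachable x a := by
  induction p with
  | nil => exact Or.inl (Reachable.refl _)
  | @cons u v w h q ih =>
    by_cases hS : s(u, v) ∈ S
    · exact Or.inr ⟨u, v, hS, Reachable.refl _⟩
    · have hadj : (H.deleteEdges S).Adj u v := by simp [h, hS]
      rcases ih with h' | ⟨a, b, hab, hr⟩
      · exact Or.inl (hadj.reachable.trans h')
      · exact Or.inr ⟨a, b, hab, hadj.reachable.trans hr⟩

/-- If a path starting at `u` contains an edge incident to `u`, that edge is the first one. -/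
lemma path_first_edge {T : SimpleGraph V} {u v w : V} (p : T.Walk u w) (hp : p.IsPath)
    (he : s(u, v) ∈ p.edges) : ∃ (h : T.Adj u v) (q : T.Walk v w), p = Walk.cons h q := by
  cases p with
  | nil => simp at he
  | @cons _ x _ h q =>
    rw [Walk.edges_cons, List.mem_cons] at he
    rcases he with he | he
    · have hx : v = x := by
        rw [Sym2.eq_iff] at he
        rcases he with ⟨-, rfl⟩ | ⟨rfl, rfl⟩
        · rfl
        · exact absurd rfl h.ne
      subst hx
      exact ⟨h, q, rfl⟩
    · have := Walk.fst_mem_support_of_mem_edges q he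
      rw [Walk.cons_isPath_iff] at hp
      exact absurd this hp.2

lemma componentSizes_def [Finite V] (H : SimpleGraph V) [inst : Fintype H.ConnectedComponent] :
    componentSizes H = (Finset.univ : Finset H.ConnectedComponent).val.map
      (fun c => c.supp.ncard) := by
  unfold componentSizes
  congr!

lemma componentSizes_eq_pair [Finite V] (H : SimpleGraph V)
    (c1 c2 : H.ConnectedComponent) (h12 : c1 ≠ c2) (hall : ∀ c, c = c1 ∨ c = c2) :
    componentSizes H = {c1.supp.ncard, c2.supp.ncard} := by
  classical
  haveI : Fintype H.ConnectedComponent := Fintype.ofFinite _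
  rw [componentSizes_def]
  have huniv : (Finset.univ : Finset H.ConnectedComponent) = {c1, c2} :=
    (Finset.eq_univ_iff_forall.2 fun c => by rcases hall c with rfl | rfl <;> simp).symm
  rw [huniv]
  have h2 : c1 ∉ ({c2} : Finset H.ConnectedComponent) := by simpa using h12
  rw [show ({c1, c2} : Finset H.ConnectedComponent) = insert c1 {c2} from rfl,
    Finset.insert_val_of_notMem h2]
  simp

lemma componentSizes_eq_triple [Finite V] (H : SimpleGraph V)
    (c1 c2 c3 : H.ConnectedComponent) (h12 : c1 ≠ c2) (h13 : c1 ≠ c3) (h23 : c2 ≠ c3)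
    (hall : ∀ c, c = c1 ∨ c = c2 ∨ c = c3) :
    componentSizes H = {c1.supp.ncard, c2.supp.ncard, c3.supp.ncard} := by
  classical
  haveI : Fintype H.ConnectedComponent := Fintype.ofFinite _
  rw [componentSizes_def]
  have huniv : (Finset.univ : Finset H.ConnectedComponent) = {c1, c2, c3} :=
    (Finset.eq_univ_iff_forall.2 fun c => by
      rcases hall c with rfl | rfl | rfl <;> simp).symm
  rw [huniv]
  have h1 : c1 ∉ ({c2, c3} : Finset H.ConnectedComponent) := by simp [h12, h13]
  have h2 : c2 ∉ ({c3} : Finset H.ConnectedComponent) := by simpa using h23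
  rw [show ({c1, c2, c3} : Finset H.ConnectedComponent) = insert c1 (insert c2 {c3}) from rfl,
    Finset.insert_val_of_notMem h1, Finset.insert_val_of_notMem h2]
  simp

/-- Transfer a walk in a subgraph `G' ≤ T` avoiding the vertex `v` to the
vertex-deleted graph. -/
lemma reach_deleteVerts {T G' : SimpleGraph V} (hle : G' ≤ T) (v : V) {x y : V}
    (p : G'.Walk x y) (hv : v ∉ p.support) (hx : x ∈ ((⊤ : T.Subgraph).deleteVerts {v}).verts)
    (hy : y ∈ ((⊤ : T.Subgraph).deleteVerts {v}).verts) :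
    ((⊤ : T.Subgraph).deleteVerts {v}).coe.Reachable ⟨x, hx⟩ ⟨y, hy⟩ := by
  induction p with
  | nil => exact Reachable.refl _
  | @cons a b c h q ih =>
    rw [Walk.support_cons, List.mem_cons] at hv
    push_neg at hv
    have hb : b ∈ ((⊤ : T.Subgraph).deleteVerts {v}).verts := by
      have hq : v ∉ q.support := hv.2
      have hbq : b ∈ q.support := Walk.start_mem_support q
      simp only [Subgraph.deleteVerts_verts, Subgraph.verts_top, Set.mem_diff,
        Set.mem_univ, true_and, Set.mem_singleton_iff]
      rintro rfl; exact hq hbq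
    have hadj : ((⊤ : T.Subgraph).deleteVerts {v}).coe.Adj ⟨a, hx⟩ ⟨b, hb⟩ := by
      simp only [Subgraph.coe_adj, Subgraph.deleteVerts_adj, Subgraph.verts_top,
        Set.mem_univ, Set.mem_singleton_iff, Subgraph.top_adj, true_and]
      refine ⟨?_, ?_, hle h⟩
      · rintro rfl; exact (hv.1 rfl).elim
      · simp only [Subgraph.deleteVerts_verts, Subgraph.verts_top, Set.mem_diff,
          Set.mem_univ, true_and, Set.mem_singleton_iff] at hb
        exact hb
    exact hadj.reachable.trans (ih hv.2 hb hy)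

/-- Transfer reachability in the vertex-deleted graph to any graph `H` whose adjacency
extends that of `T` off `v`. -/
lemma reach_of_deleteVerts {T : SimpleGraph V} (v : V) (H : SimpleGraph V)
    (hH : ∀ a b : V, T.Adj a b → a ≠ v → b ≠ v → H.Adj a b)
    {x y : ((⊤ : T.Subgraph).deleteVerts {v}).verts}
    (h : ((⊤ : T.Subgraph).deleteVerts {v}).coe.Reachable x y) :
    H.Reachable x.1 y.1 := by
  obtain ⟨p⟩ := h
  induction p with
  | nil => exact Reachable.refl _
  | @cons a b c h q ih =>
    have hab : H.Adj a.1 b.1 := by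
      simp only [Subgraph.coe_adj, Subgraph.deleteVerts_adj, Subgraph.verts_top,
        Set.mem_univ, Set.mem_singleton_iff, Subgraph.top_adj, true_and] at h
      exact hH _ _ h.2.2 h.1 h.2.1
    exact hab.reachable.trans ih

/-- Lower bound for the weight: any connected component of a subgraph `G' ≤ T`
avoiding `v` fits in one component of `T - v`. -/
lemma weight_ge [Finite V] (T : SimpleGraph V) (v : V) (G' : SimpleGraph V) (hle : G' ≤ T)
    (c : G'.ConnectedComponent) (hv : v ∉ c.supp) : c.supp.ncard ≤ weight T v := by
  classical
  obtain ⟨u0, rfl⟩ := c.exists_rep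
  have hu0 : u0 ∈ (G'.connectedComponentMk u0).supp := by
    simp [ConnectedComponent.mem_supp_iff]
  have hu0v : u0 ∈ ((⊤ : T.Subgraph).deleteVerts {v}).verts := by
    simp only [Subgraph.deleteVerts_verts, Subgraph.verts_top, Set.mem_diff, Set.mem_univ,
      true_and, Set.mem_singleton_iff]
    rintro rfl; exact hv hu0
  set D := ((⊤ : T.Subgraph).deleteVerts {v}).coe
  set cD := D.connectedComponentMk ⟨u0, hu0v⟩ with hcD
  have hsub : (G'.connectedComponentMk u0).supp ⊆ Subtype.val '' cD.supp := by
    intro x hx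
    have hreach : G'.Reachable x u0 := by
      rw [ConnectedComponent.mem_supp_iff, ConnectedComponent.eq] at hx
      exact hx
    obtain ⟨p⟩ := hreach
    have hsupp : ∀ z ∈ p.support, z ∈ (G'.connectedComponentMk u0).supp := by
      intro z hz
      rw [ConnectedComponent.mem_supp_iff, ConnectedComponent.eq]
      exact ⟨p.dropUntil z hz⟩
    have hvp : v ∉ p.support := fun hmem => hv (hsupp v hmem)
    have hxv : x ∈ ((⊤ : T.Subgraph).deleteVerts {v}).verts := by
      simp only [Subgraph.deleteVerts_verts, Subgraph.verts_top, Set.mem_diff, Set.mem_univ,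
        true_and, Set.mem_singleton_iff]
      rintro rfl; exact hv hx
    have hD : D.Reachable ⟨x, hxv⟩ ⟨u0, hu0v⟩ := reach_deleteVerts hle v p hvp hxv hu0v
    exact ⟨⟨x, hxv⟩,
      by rw [ConnectedComponent.mem_supp_iff, hcD, ConnectedComponent.eq]; exact hD, rfl⟩
  calc (G'.connectedComponentMk u0).supp.ncard
      ≤ (Subtype.val '' cD.supp).ncard := Set.ncard_le_ncard hsub (Set.toFinite _)
    _ = cD.supp.ncard := Set.ncard_image_of_injective _ Subtype.val_injective
    _ ≤ weight T v := by
        apply le_csSup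
        · exact (Set.finite_range _).bddAbove
        · exact ⟨cD, rfl⟩

/-- Upper bound for the weight. -/
lemma weight_le [Finite V] (T : SimpleGraph V) (v : V) (m : ℕ)
    (h : ∀ c : ((⊤ : T.Subgraph).deleteVerts {v}).coe.ConnectedComponent,
      c.supp.ncard ≤ m) : weight T v ≤ m := by
  unfold weight
  rcases isEmpty_or_nonempty
    ((⊤ : T.Subgraph).deleteVerts {v}).coe.ConnectedComponent with hE | hN
  · rw [Set.range_eq_empty]
    simp
  · exact csSup_le (Set.range_nonempty _) (by rintro _ ⟨c, rfl⟩; exact h c)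

/-- Key upper bound on the weight of an endpoint of an edge of a tree. -/
lemma weight_le_of_adj [Finite V] (T : SimpleGraph V) (hT : T.IsTree) {v w : V}
    (hvw : T.Adj v w) :
    weight T v ≤ max ((T.deleteEdges {s(v, w)}).connectedComponentMk w).supp.ncard
      (((T.deleteEdges {s(v, w)}).connectedComponentMk v).supp.ncard - 1) := by
  classical
  set Ge := T.deleteEdges {s(v, w)} with hGe
  have hbr : ¬Ge.Reachable v w := by
    have hb : T.IsBridge s(v, w) := (isAcyclic_iff_forall_adj_isBridge.1 hT.IsAcyclic) hvw
    exact (isBridge_iff.1 hb)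
  have hcov : ∀ x : V, Ge.Reachable x v ∨ Ge.Reachable x w := by
    intro x
    obtain ⟨p⟩ := hT.isConnected.preconnected x v
    rcases reach_or_hit T {s(v, w)} p with h' | ⟨a, b, hab, hr⟩
    · exact Or.inl h'
    · rw [Set.mem_singleton_iff, Sym2.eq_iff] at hab
      rcases hab with ⟨rfl, rfl⟩ | ⟨rfl, rfl⟩
      · exact Or.inl hr
      · exact Or.inr hr
  have hwv : w ∈ ((⊤ : T.Subgraph).deleteVerts {v}).verts := by
    simp only [Subgraph.deleteVerts_verts, Subgraph.verts_top, Set.mem_diff, Set.mem_univ,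
      true_and, Set.mem_singleton_iff]
    exact hvw.ne'
  set D := ((⊤ : T.Subgraph).deleteVerts {v}).coe with hD
  apply weight_le
  intro c
  have himg : c.supp.ncard = (Subtype.val '' c.supp).ncard :=
    (Set.ncard_image_of_injective _ Subtype.val_injective).symm
  by_cases hw : ⟨w, hwv⟩ ∈ c.supp
  · refine le_max_of_le_left ?_
    rw [himg]
    apply Set.ncard_le_ncard _ (Set.toFinite _)
    rintro _ ⟨x, hx, rfl⟩
    have hreach : D.Reachable x ⟨w, hwv⟩ := by
      rw [ConnectedComponent.mem_supp_iff] at hx hw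
      exact ConnectedComponent.exact (hx.trans hw.symm)
    have hxw : Ge.Reachable x.1 w := by
      refine reach_of_deleteVerts v Ge ?_ hreach
      intro a b hab ha hb
      simp only [hGe, deleteEdges_adj, Set.mem_singleton_iff, Sym2.eq_iff]
      exact ⟨hab, by rintro (⟨rfl, rfl⟩ | ⟨rfl, rfl⟩) <;> simp at ha hb⟩
    rw [ConnectedComponent.mem_supp_iff, ConnectedComponent.eq]
    exact hxw
  · refine le_max_of_le_right ?_
    rw [himg]
    have hsub : Subtype.val '' c.supp ⊆
        ((Ge.connectedComponentMk v).supp : Set V) \ {v} := by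
      rintro _ ⟨x, hx, rfl⟩
      have hxv : x.1 ≠ v := by
        have hx2 := x.2
        simp only [Subgraph.deleteVerts_verts, Subgraph.verts_top, Set.mem_diff, Set.mem_univ,
          true_and, Set.mem_singleton_iff] at hx2
        exact hx2
      refine ⟨?_, hxv⟩
      rcases hcov x.1 with h' | h'
      · rw [ConnectedComponent.mem_supp_iff, ConnectedComponent.eq]
        exact h'
      · exfalso
        obtain ⟨q⟩ := h'
        have hsupp : ∀ z ∈ q.support, Ge.Reachable z w := fun z hz => ⟨q.dropUntil z hz⟩
        have hvq : v ∉ q.support := fun hmem => hbr (hsupp v hmem)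
        have hDr : D.Reachable ⟨x.1, x.2⟩ ⟨w, hwv⟩ :=
          reach_deleteVerts (deleteEdges_le _) v q hvq x.2 hwv
        apply hw
        rw [ConnectedComponent.mem_supp_iff] at hx ⊢
        rw [← hx, ConnectedComponent.eq]
        exact hDr.symm
    calc (Subtype.val '' c.supp).ncard
        ≤ (((Ge.connectedComponentMk v).supp : Set V) \ {v}).ncard :=
          Set.ncard_le_ncard hsub (Set.toFinite _)
      _ = (Ge.connectedComponentMk v).supp.ncard - 1 := by
          rw [Set.ncard_diff_singleton_of_mem]
          simp [ConnectedComponent.mem_supp_iff]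

end Aux
/-- For distinct edges `e_a, e_b` of a tree `T` of order `n` with
`θ_T(e_a) = (n-i, i)`, `θ_T(e_b) = (n-k, k)` and `i ≥ k` (smaller parts), we have
`θ_T({e_a, e_b}) = re(n-i, i-k, k)` if and only if `e_a` and `e_b` attract. -/
theorem theta_pair_iff_attract {V : Type*} [Fintype V] (T : SimpleGraph V)
    (hT : T.IsTree) (n : ℕ) (hn : n = Fintype.card V)
    (ea eb : Sym2 V) (hea : ea ∈ T.edgeSet) (heb : eb ∈ T.edgeSet) (hne : ea ≠ eb)
    (i k : ℕ) (hki : k ≤ i) (hi : i ≤ n - i) (hk : k ≤ n - k)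
    (ha : theta T {ea} = {n - i, i}) (hb : theta T {eb} = {n - k, k}) :
    theta T {ea, eb} = {n - i, i - k, k} ↔ Attract T ea eb := by
  classical
  -- ### Step 1: labeling of the endpoints with a middle pair
  have main : ∃ a1 a2 b1 b2 : V, ea = s(a1, a2) ∧ eb = s(b1, b2) ∧
      (T.deleteEdges {ea, eb}).Reachable a2 b1 := by
    obtain ⟨x1, x2, hA⟩ : ∃ u v, ea = s(u, v) := by
      induction ea using Sym2.ind with | _ x y => exact ⟨x, y, rfl⟩
    obtain ⟨y1, y2, hB⟩ : ∃ u v, eb = s(u, v) := by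
      induction eb using Sym2.ind with | _ x y => exact ⟨x, y, rfl⟩
    obtain ⟨w0⟩ := hT.isConnected.preconnected x1 y1
    set p : T.Path x1 y1 := w0.toPath with hp
    have step1 : ∃ (u1 u2 : V) (q : T.Walk u2 y1),
        ea = s(u1, u2) ∧ q.IsPath ∧ ea ∉ q.edges := by
      by_cases hmem : ea ∈ p.1.edges
      · rw [hA] at hmem
        obtain ⟨hadj, q, hq⟩ := path_first_edge p.1 p.2 hmem
        have hq' : q.IsPath := by
          have := p.2
          rw [hq, Walk.cons_isPath_iff] at this
          exact this.1
        have hnodup : ea ∉ q.edges := by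
          have := p.2.edges_nodup
          rw [hq, Walk.edges_cons, List.nodup_cons] at this
          rw [hA]
          exact this.1
        exact ⟨x1, x2, q, hA, hq', hnodup⟩
      · exact ⟨x2, x1, p.1, by rw [hA, Sym2.eq_swap], p.2, hmem⟩
    obtain ⟨u1, u2, q, hu, hqp, hqa⟩ := step1
    by_cases hmemb : eb ∈ q.edges
    · have hrev : eb ∈ q.reverse.edges := by rwa [Walk.edges_reverse, List.mem_reverse]
      rw [hB] at hrev
      obtain ⟨hadj, r, hr⟩ := path_first_edge q.reverse hqp.reverse hrev
      have hrp : r.IsPath := by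
        have := hqp.reverse
        rw [hr, Walk.cons_isPath_iff] at this
        exact this.1
      have hrb : eb ∉ r.edges := by
        have := hqp.reverse.edges_nodup
        rw [hr, Walk.edges_cons, List.nodup_cons] at this
        rw [hB]
        exact this.1
      have hra : ea ∉ r.edges := by
        intro hmem'
        apply hqa
        have : ea ∈ q.reverse.edges := by rw [hr, Walk.edges_cons]; exact List.mem_cons_of_mem _ hmem'
        rwa [Walk.edges_reverse, List.mem_reverse] at this
      have hreach : (T.deleteEdges {ea, eb}).Reachable y2 u2 :=
        ⟨r.toDeleteEdges {ea, eb} (by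
          intro e he
          simp only [Set.mem_insert_iff, Set.mem_singleton_iff]
          rintro (rfl | rfl)
          exacts [hra he, hrb he])⟩
      exact ⟨u1, u2, y2, y1, hu, by rw [hB, Sym2.eq_swap], hreach.symm⟩
    · have hreach : (T.deleteEdges {ea, eb}).Reachable u2 y1 :=
        ⟨q.toDeleteEdges {ea, eb} (by
          intro e he
          simp only [Set.mem_insert_iff, Set.mem_singleton_iff]
          rintro (rfl | rfl)
          exacts [hqa he, hmemb he])⟩
      exact ⟨u1, u2, y1, y2, hu, hB, hreach⟩
  obtain ⟨a1, a2, b1, b2, heaq, hebq, hmid⟩ := main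
  have hadja : T.Adj a1 a2 := by rw [heaq] at hea; exact hea
  have hadjb : T.Adj b1 b2 := by rw [hebq] at heb; exact heb
  set G := T.deleteEdges {ea, eb} with hG
  set Ge := T.deleteEdges {ea} with hGe
  set Gb := T.deleteEdges {eb} with hGb
  have hGeq1 : Ge.deleteEdges {eb} = G := by
    rw [hGe, hG, deleteEdges_deleteEdges, Set.singleton_union]
  have hGeq2 : Gb.deleteEdges {ea} = G := by
    rw [hGb, hG, deleteEdges_deleteEdges, Set.singleton_union, Set.pair_comm]
  have hGle : G ≤ T := deleteEdges_le _
  have hGGe : G ≤ Ge := by rw [← hGeq1]; exact deleteEdges_le _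
  have hGGb : G ≤ Gb := by rw [← hGeq2]; exact deleteEdges_le _
  have hGeT : Ge ≤ T := deleteEdges_le _
  have hGbT : Gb ≤ T := deleteEdges_le _
  -- bridges
  have hbrA : ¬Ge.Reachable a1 a2 := by
    have hbb : T.IsBridge s(a1, a2) := (isAcyclic_iff_forall_adj_isBridge.1 hT.IsAcyclic) hadja
    have := (isBridge_iff.1 hbb)
    rw [hGe, heaq]
    exact this
  have hbrB : ¬Gb.Reachable b1 b2 := by
    have hbb : T.IsBridge s(b1, b2) := (isAcyclic_iff_forall_adj_isBridge.1 hT.IsAcyclic) hadjb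
    have := (isBridge_iff.1 hbb)
    rw [hGb, hebq]
    exact this
  -- edges surviving single deletions
  have hGeAdjb : Ge.Adj b1 b2 := by
    rw [hGe]
    simp only [deleteEdges_adj, Set.mem_singleton_iff]
    exact ⟨hadjb, by rw [← hebq]; exact fun h => hne h.symm⟩
  have hGbAdja : Gb.Adj a1 a2 := by
    rw [hGb]
    simp only [deleteEdges_adj, Set.mem_singleton_iff]
    exact ⟨hadja, by rw [← heaq]; exact hne⟩
  -- non-reachability of the four pairs in G
  have hnr12 : ¬G.Reachable a1 a2 := fun h => hbrA (h.mono hGGe)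
  have hnrb12 : ¬G.Reachable b1 b2 := fun h => hbrB (h.mono hGGb)
  have hnr1b1 : ¬G.Reachable a1 b1 := fun h => hbrA ((h.trans hmid.symm).mono hGGe)
  have hnr1b2 : ¬G.Reachable a1 b2 := fun h => by
    apply hbrB
    have h1 : Gb.Reachable b1 a2 := (hmid.symm).mono hGGb
    have h2 : Gb.Reachable a2 a1 := hGbAdja.symm.reachable
    exact (h1.trans h2).trans (h.mono hGGb)
  have hnr2b2 : ¬G.Reachable a2 b2 := fun h => hnrb12 (hmid.symm.trans h)
  -- cover of all vertices by the four endpoints in G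
  have hcov : ∀ x : V, G.Reachable x a1 ∨ G.Reachable x a2 ∨
      G.Reachable x b1 ∨ G.Reachable x b2 := by
    intro x
    obtain ⟨p⟩ := hT.isConnected.preconnected x a1
    rcases reach_or_hit T {ea, eb} p with h' | ⟨a, b, hab, hr⟩
    · exact Or.inl h'
    · simp only [Set.mem_insert_iff, Set.mem_singleton_iff] at hab
      rcases hab with hab | hab
      · rw [heaq, Sym2.eq_iff] at hab
        rcases hab with ⟨rfl, -⟩ | ⟨rfl, -⟩
        · exact Or.inl hr
        · exact Or.inr (Or.inl hr)
      · rw [hebq, Sym2.eq_iff] at hab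
        rcases hab with ⟨rfl, -⟩ | ⟨rfl, -⟩
        · exact Or.inr (Or.inr (Or.inl hr))
        · exact Or.inr (Or.inr (Or.inr hr))
  -- the three components of G
  set cX := G.connectedComponentMk a1 with hcX
  set cY := G.connectedComponentMk a2 with hcY
  set cZ := G.connectedComponentMk b2 with hcZ
  have hYb1 : G.connectedComponentMk b1 = cY := ConnectedComponent.sound hmid.symm
  have hXY : cX ≠ cY := fun h => hnr12 (ConnectedComponent.exact h)
  have hXZ : cX ≠ cZ := fun h => hnr1b2 (ConnectedComponent.exact h)
  have hYZ : cY ≠ cZ := fun h => hnr2b2 (ConnectedComponent.exact h)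
  have hallG : ∀ c : G.ConnectedComponent, c = cX ∨ c = cY ∨ c = cZ := by
    intro c
    obtain ⟨x, rfl⟩ := c.exists_rep
    rcases hcov x with h | h | h | h
    · exact Or.inl (ConnectedComponent.sound h)
    · exact Or.inr (Or.inl (ConnectedComponent.sound h))
    · exact Or.inr (Or.inl ((ConnectedComponent.sound h).trans hYb1))
    · exact Or.inr (Or.inr (ConnectedComponent.sound h))
  have h3 : theta T {ea, eb} = {cX.supp.ncard, cY.supp.ncard, cZ.supp.ncard} := by
    unfold theta
    rw [← hG]
    exact componentSizes_eq_triple G cX cY cZ hXY hXZ hYZ hallG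
  -- components of Ge
  set dA1 := Ge.connectedComponentMk a1 with hdA1
  set dA2 := Ge.connectedComponentMk a2 with hdA2
  have hdA : dA1 ≠ dA2 := fun h => hbrA (ConnectedComponent.exact h)
  have hcovGe : ∀ x : V, Ge.Reachable x a1 ∨ Ge.Reachable x a2 := by
    intro x
    obtain ⟨p⟩ := hT.isConnected.preconnected x a1
    rcases reach_or_hit T {ea} p with h' | ⟨a, b, hab, hr⟩
    · exact Or.inl (by rw [hGe]; exact h')
    · rw [Set.mem_singleton_iff, heaq, Sym2.eq_iff] at hab
      rw [← hGe] at hr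
      rcases hab with ⟨rfl, -⟩ | ⟨rfl, -⟩
      · exact Or.inl hr
      · exact Or.inr hr
  have hallGe : ∀ c : Ge.ConnectedComponent, c = dA1 ∨ c = dA2 := by
    intro c
    obtain ⟨x, rfl⟩ := c.exists_rep
    rcases hcovGe x with h | h
    · exact Or.inl (ConnectedComponent.sound h)
    · exact Or.inr (ConnectedComponent.sound h)
  have h1 : theta T {ea} = {dA1.supp.ncard, dA2.supp.ncard} := by
    unfold theta
    rw [← hGe]
    exact componentSizes_eq_pair Ge dA1 dA2 hdA hallGe
  -- components of Gb
  set dB1 := Gb.connectedComponentMk b1 with hdB1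
  set dB2 := Gb.connectedComponentMk b2 with hdB2
  have hdB : dB1 ≠ dB2 := fun h => hbrB (ConnectedComponent.exact h)
  have hcovGb : ∀ x : V, Gb.Reachable x b1 ∨ Gb.Reachable x b2 := by
    intro x
    obtain ⟨p⟩ := hT.isConnected.preconnected x b1
    rcases reach_or_hit T {eb} p with h' | ⟨a, b, hab, hr⟩
    · exact Or.inl (by rw [hGb]; exact h')
    · rw [Set.mem_singleton_iff, hebq, Sym2.eq_iff] at hab
      rw [← hGb] at hr
      rcases hab with ⟨rfl, -⟩ | ⟨rfl, -⟩
      · exact Or.inl hr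
      · exact Or.inr hr
  have hallGb : ∀ c : Gb.ConnectedComponent, c = dB1 ∨ c = dB2 := by
    intro c
    obtain ⟨x, rfl⟩ := c.exists_rep
    rcases hcovGb x with h | h
    · exact Or.inl (ConnectedComponent.sound h)
    · exact Or.inr (ConnectedComponent.sound h)
  have h2 : theta T {eb} = {dB1.supp.ncard, dB2.supp.ncard} := by
    unfold theta
    rw [← hGb]
    exact componentSizes_eq_pair Gb dB1 dB2 hdB hallGb
  
  -- ### Step 2: side identifications
  have hGeb2a2 : Ge.Reachable b2 a2 := hGeAdjb.symm.reachable.trans (hmid.symm.mono hGGe)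
  have hGba1b1 : Gb.Reachable a1 b1 := hGbAdja.reachable.trans (hmid.mono hGGb)
  have hXside : ∀ x, Ge.Reachable x a1 → G.Reachable x a1 := by
    intro x h
    obtain ⟨p⟩ := h
    have h' : Ge.Reachable x a1 := ⟨p⟩
    rcases reach_or_hit Ge {eb} p with hgood | ⟨a, b, hab, hr⟩
    · rwa [hGeq1] at hgood
    · rw [hGeq1] at hr
      exfalso
      rw [Set.mem_singleton_iff, hebq, Sym2.eq_iff] at hab
      rcases hab with ⟨rfl, -⟩ | ⟨rfl, -⟩
      · exact hbrA (h'.symm.trans ((hr.trans hmid.symm).mono hGGe))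
      · exact hbrA (h'.symm.trans ((hr.mono hGGe).trans hGeb2a2))
  have hsA1 : dA1.supp = cX.supp := by
    ext x
    rw [ConnectedComponent.mem_supp_iff, ConnectedComponent.mem_supp_iff, hdA1, hcX,
      ConnectedComponent.eq, ConnectedComponent.eq]
    exact ⟨fun h => hXside x h, fun h => h.mono hGGe⟩
  have hA2side : ∀ x, Ge.Reachable x a2 → (G.Reachable x a2 ∨ G.Reachable x b2) := by
    intro x h
    rcases hcov x with h' | h' | h' | h'
    · exact absurd ((h'.mono hGGe).symm.trans h) hbrA
    · exact Or.inl h'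
    · exact Or.inl (h'.trans hmid.symm)
    · exact Or.inr h'
  have hsA2 : dA2.supp = cY.supp ∪ cZ.supp := by
    ext x
    rw [Set.mem_union, ConnectedComponent.mem_supp_iff, ConnectedComponent.mem_supp_iff,
      ConnectedComponent.mem_supp_iff, hdA2, hcY, hcZ,
      ConnectedComponent.eq, ConnectedComponent.eq, ConnectedComponent.eq]
    constructor
    · exact hA2side x
    · rintro (h | h)
      · exact h.mono hGGe
      · exact (h.mono hGGe).trans hGeb2a2
  have hZside : ∀ x, Gb.Reachable x b2 → G.Reachable x b2 := by
    intro x h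
    obtain ⟨p⟩ := h
    have h' : Gb.Reachable x b2 := ⟨p⟩
    rcases reach_or_hit Gb {ea} p with hgood | ⟨a, b, hab, hr⟩
    · rwa [hGeq2] at hgood
    · rw [hGeq2] at hr
      exfalso
      rw [Set.mem_singleton_iff, heaq, Sym2.eq_iff] at hab
      rcases hab with ⟨rfl, -⟩ | ⟨rfl, -⟩
      · exact hbrB (hGba1b1.symm.trans ((hr.mono hGGb).symm.trans h'))
      · exact hbrB ((hmid.mono hGGb).symm.trans ((hr.mono hGGb).symm.trans h'))
  have hsB2 : dB2.supp = cZ.supp := by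
    ext x
    rw [ConnectedComponent.mem_supp_iff, ConnectedComponent.mem_supp_iff, hdB2, hcZ,
      ConnectedComponent.eq, ConnectedComponent.eq]
    exact ⟨fun h => hZside x h, fun h => h.mono hGGb⟩
  have hsB1 : dB1.supp = cX.supp ∪ cY.supp := by
    ext x
    rw [Set.mem_union, ConnectedComponent.mem_supp_iff, ConnectedComponent.mem_supp_iff,
      ConnectedComponent.mem_supp_iff, hdB1, hcX, hcY,
      ConnectedComponent.eq, ConnectedComponent.eq, ConnectedComponent.eq]
    constructor
    · intro h
      rcases hcov x with h' | h' | h' | h'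
      · exact Or.inl h'
      · exact Or.inr h'
      · exact Or.inr (h'.trans hmid.symm)
      · exact absurd (h.symm.trans (h'.mono hGGb)) hbrB
    · rintro (h | h)
      · exact (h.mono hGGb).trans hGba1b1
      · exact (h.mono hGGb).trans (hmid.mono hGGb)
  -- ### Step 3: the numbers
  set nx := cX.supp.ncard with hnxdef
  set ny := cY.supp.ncard with hnydef
  set nz := cZ.supp.ncard with hnzdef
  have hdXY : Disjoint cX.supp cY.supp := by
    rw [Set.disjoint_left]
    intro u h1 h2
    rw [ConnectedComponent.mem_supp_iff] at h1 h2
    exact hXY (h1.symm.trans h2)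
  have hdXZ : Disjoint cX.supp cZ.supp := by
    rw [Set.disjoint_left]
    intro u h1 h2
    rw [ConnectedComponent.mem_supp_iff] at h1 h2
    exact hXZ (h1.symm.trans h2)
  have hdYZ : Disjoint cY.supp cZ.supp := by
    rw [Set.disjoint_left]
    intro u h1 h2
    rw [ConnectedComponent.mem_supp_iff] at h1 h2
    exact hYZ (h1.symm.trans h2)
  have hUnionYZ : (cY.supp ∪ cZ.supp).ncard = ny + nz := Set.ncard_union_eq hdYZ
  have hUnionXY : (cX.supp ∪ cY.supp).ncard = nx + ny := Set.ncard_union_eq hdXY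
  have hsum : nx + ny + nz = n := by
    have huniv : (Set.univ : Set V) = cX.supp ∪ (cY.supp ∪ cZ.supp) := by
      ext u
      simp only [Set.mem_univ, true_iff, Set.mem_union, ConnectedComponent.mem_supp_iff]
      rcases hallG (G.connectedComponentMk u) with h | h | h
      · exact Or.inl h
      · exact Or.inr (Or.inl h)
      · exact Or.inr (Or.inr h)
    have hcard := Set.ncard_univ V
    rw [huniv, Set.ncard_union_eq (Set.disjoint_union_right.2 ⟨hdXY, hdXZ⟩),
      hUnionYZ, Nat.card_eq_fintype_card] at hcard
    omega
  have hnx1 : 0 < nx := by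
    rw [hnxdef]
    exact (Set.ncard_pos (Set.toFinite _)).2
      ⟨a1, by rw [ConnectedComponent.mem_supp_iff, hcX]⟩
  have hny1 : 0 < ny := by
    rw [hnydef]
    exact (Set.ncard_pos (Set.toFinite _)).2
      ⟨a2, by rw [ConnectedComponent.mem_supp_iff, hcY]⟩
  have hnz1 : 0 < nz := by
    rw [hnzdef]
    exact (Set.ncard_pos (Set.toFinite _)).2
      ⟨b2, by rw [ConnectedComponent.mem_supp_iff, hcZ]⟩
  rw [hsA1, hsA2, hUnionYZ] at h1
  rw [hsB1, hsB2, hUnionXY] at h2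
  have hA' : ({nx, ny + nz} : Multiset ℕ) = {n - i, i} := h1.symm.trans ha
  have hB' : ({nx + ny, nz} : Multiset ℕ) = {n - k, k} := h2.symm.trans hb
  have m1 : nx = n - i ∨ nx = i := by
    have hm : nx ∈ ({n - i, i} : Multiset ℕ) := by rw [← hA']; simp
    simpa using hm
  have m2 : ny + nz = n - i ∨ ny + nz = i := by
    have hm : ny + nz ∈ ({n - i, i} : Multiset ℕ) := by rw [← hA']; simp
    simpa using hm
  have m3 : nz = n - k ∨ nz = k := by
    have hm : nz ∈ ({n - k, k} : Multiset ℕ) := by rw [← hB']; simp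
    simpa using hm
  have m4 : nx + ny = n - k ∨ nx + ny = k := by
    have hm : nx + ny ∈ ({n - k, k} : Multiset ℕ) := by rw [← hB']; simp
    simpa using hm
  have hnzk : nz = k := by omega
  -- ### Step 4: weight bounds at the endpoints of ea
  have hwa1 : weight T a1 ≤ max (ny + nz) (nx - 1) := by
    have h := weight_le_of_adj T hT hadja
    rw [← heaq, ← hGe, ← hdA1, ← hdA2, hsA1, hsA2, hUnionYZ] at h
    exact h
  have hwa2 : weight T a2 ≤ max nx (ny + nz - 1) := by
    have h := weight_le_of_adj T hT hadja.symm
    rw [show s(a2, a1) = ea by rw [heaq, Sym2.eq_swap], ← hGe, ← hdA1, ← hdA2,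
      hsA1, hsA2, hUnionYZ] at h
    exact h
  have hval1 : dA1.supp.ncard = nx := by rw [hsA1]
  have hval2 : dA2.supp.ncard = ny + nz := by rw [hsA2, hUnionYZ]
  have hvalB1 : dB1.supp.ncard = nx + ny := by rw [hsB1, hUnionXY]
  -- ### Step 5: constructing an attracting path from a centroid vertex in X
  have attract_of : ∀ c : V, (∀ u, weight T c ≤ weight T u) → G.Reachable c a1 →
      Attract T ea eb := by
    intro c hcmin hcr
    obtain ⟨w0⟩ := hT.isConnected.preconnected c b2
    set p : T.Path c b2 := w0.toPath with hpdef
    have hae : ea ∈ p.1.edges := by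
      by_contra h'
      have hreach : Ge.Reachable c b2 := by
        rw [hGe]
        exact ⟨p.1.toDeleteEdges {ea} (by
          intro e he
          simp only [Set.mem_singleton_iff]
          rintro rfl
          exact h' he)⟩
      exact hbrA (((hcr.mono hGGe).symm.trans hreach).trans hGeb2a2)
    have hbe : eb ∈ p.1.edges := by
      by_contra h'
      have hreach : Gb.Reachable c b2 := by
        rw [hGb]
        exact ⟨p.1.toDeleteEdges {eb} (by
          intro e he
          simp only [Set.mem_singleton_iff]
          rintro rfl
          exact h' he)⟩
      exact hbrB ((hGba1b1.symm.trans (hcr.mono hGGb).symm).trans hreach)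
    exact ⟨c, b2, p.1, hcmin, p.2, hae, hbe⟩
  -- ### Step 6: the equivalence
  constructor
  · -- θ equality → attract
    intro hθ
    have hmem : n - i = nx ∨ n - i = ny ∨ n - i = nz := by
      have h33 : ({nx, ny, nz} : Multiset ℕ) = {n - i, i - k, k} := h3.symm.trans hθ
      have hm : (n - i) ∈ ({nx, ny, nz} : Multiset ℕ) := by rw [h33]; simp
      simpa using hm
    have hnxval : nx = n - i := by omega
    rcases eq_or_lt_of_le hi with hii | hii
    · -- i = n - i : a1 is a centroid vertex
      have hcent : ∀ u, weight T a1 ≤ weight T u := by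
        intro u
        rcases hcovGe u with h | h
        · have hu2 : u ∉ dA2.supp := by
            rw [ConnectedComponent.mem_supp_iff, hdA2, ConnectedComponent.eq]
            intro h'
            exact hbrA (h.symm.trans h')
          have hge := weight_ge T u Ge hGeT dA2 hu2
          rw [hval2] at hge
          omega
        · have hu1 : u ∉ dA1.supp := by
            rw [ConnectedComponent.mem_supp_iff, hdA1, ConnectedComponent.eq]
            intro h'
            exact hbrA (h'.symm.trans h)
          have hge := weight_ge T u Ge hGeT dA1 hu1
          rw [hval1] at hge
          omega
      exact attract_of a1 hcent (Reachable.refl a1)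
    · -- i < n - i : any centroid vertex lies in X
      haveI : Nonempty V := ⟨a1⟩
      obtain ⟨c, hc⟩ := Finite.exists_min (weight T)
      have hcr : G.Reachable c a1 := by
        by_contra hnc
        have hcm : c ∉ cX.supp := by
          rw [ConnectedComponent.mem_supp_iff, hcX, ConnectedComponent.eq]
          exact hnc
        have hge := weight_ge T c G hGle cX hcm
        have hle2 := (hc a1).trans hwa1
        rw [← hnxdef] at hge
        omega
      exact attract_of c hc hcr
  · -- attract → θ equality
    intro hat
    rcases m1 with hnx | hnx
    · -- |X| = n - i : the equality always holds
      have hnyv : ny = i - k := by omega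
      rw [h3, hnx, hnyv, hnzk]
    · rcases eq_or_lt_of_le hi with hii | hii
      · -- i = n - i
        have hnyv : ny = i - k := by omega
        rw [h3, hnx, hnyv, hnzk, ← hii]
      · -- |X| = i < n - i : contradiction with attraction
        exfalso
        -- auxiliary walk lemmas
        have lemB2 : ∀ (u w : V) (q : T.Walk u w), ea ∉ q.edges → eb ∈ q.edges →
            G.Reachable u b1 ∨ G.Reachable u b2 := by
          intro u w q
          induction q with
          | nil => intro _ h; simp at h
          | @cons u' v' w' hadj q' ih =>
            intro hna hbmem
            by_cases hh : s(u', v') = eb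
            · rw [hebq, Sym2.eq_iff] at hh
              rcases hh with ⟨rfl, -⟩ | ⟨rfl, -⟩
              · exact Or.inl (Reachable.refl _)
              · exact Or.inr (Reachable.refl _)
            · have hnae : s(u', v') ≠ ea := by
                intro h
                exact hna (by rw [Walk.edges_cons, ← h]; exact List.mem_cons_self)
              have hna' : ea ∉ q'.edges := fun h =>
                hna (by rw [Walk.edges_cons]; exact List.mem_cons_of_mem _ h)
              have hbmem' : eb ∈ q'.edges := by
                rw [Walk.edges_cons, List.mem_cons] at hbmem
                rcases hbmem with h | h
                · exact absurd h.symm hh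
                · exact h
              have hGadj : G.Adj u' v' := by
                rw [hG]
                simp only [deleteEdges_adj, Set.mem_insert_iff, Set.mem_singleton_iff]
                exact ⟨hadj, by rintro (h | h); exacts [hnae h, hh h]⟩
              rcases ih hna' hbmem' with h | h
              · exact Or.inl (hGadj.reachable.trans h)
              · exact Or.inr (hGadj.reachable.trans h)
        have lemA2 : ∀ (u w : V) (q : T.Walk u w), eb ∉ q.edges → ea ∈ q.edges →
            G.Reachable u a1 ∨ G.Reachable u a2 := by
          intro u w q
          induction q with
          | nil => intro _ h; simp at h
          | @cons u' v' w' hadj q' ih =>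
            intro hnb hamem
            by_cases hh : s(u', v') = ea
            · rw [heaq, Sym2.eq_iff] at hh
              rcases hh with ⟨rfl, -⟩ | ⟨rfl, -⟩
              · exact Or.inl (Reachable.refl _)
              · exact Or.inr (Reachable.refl _)
            · have hnbe : s(u', v') ≠ eb := by
                intro h
                exact hnb (by rw [Walk.edges_cons, ← h]; exact List.mem_cons_self)
              have hnb' : eb ∉ q'.edges := fun h =>
                hnb (by rw [Walk.edges_cons]; exact List.mem_cons_of_mem _ h)
              have hamem' : ea ∈ q'.edges := by
                rw [Walk.edges_cons, List.mem_cons] at hamem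
                rcases hamem with h | h
                · exact absurd h.symm hh
                · exact h
              have hGadj : G.Adj u' v' := by
                rw [hG]
                simp only [deleteEdges_adj, Set.mem_insert_iff, Set.mem_singleton_iff]
                exact ⟨hadj, by rintro (h | h); exacts [hh h, hnbe h]⟩
              rcases ih hnb' hamem' with h | h
              · exact Or.inl (hGadj.reachable.trans h)
              · exact Or.inr (hGadj.reachable.trans h)
        have claim : ∀ (u w : V) (q : T.Walk u w), q.IsPath → ea ∈ q.edges → eb ∈ q.edges →
            G.Reachable u a1 ∨ G.Reachable u b2 := by
          intro u w q
          induction q with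
          | nil => intro _ h; simp at h
          | @cons u' v' w' hadj q' ih =>
            intro hip hamem hbmem
            by_cases h1 : s(u', v') = ea
            · have hnoa : ea ∉ q'.edges := by
                have hnd := hip.isTrail.edges_nodup
                rw [Walk.edges_cons, List.nodup_cons, h1] at hnd
                exact hnd.1
              have hbmem' : eb ∈ q'.edges := by
                rw [Walk.edges_cons, List.mem_cons] at hbmem
                rcases hbmem with h | h
                · exact absurd ((h.trans h1).symm) hne
                · exact h
              rw [heaq, Sym2.eq_iff] at h1
              rcases h1 with ⟨rfl, -⟩ | ⟨h1a, h1b⟩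
              · exact Or.inl (Reachable.refl _)
              · rcases lemB2 v' w' q' hnoa hbmem' with h | h
                · rw [h1b] at h; exact absurd h hnr1b1
                · rw [h1b] at h; exact absurd h hnr1b2
            · by_cases h2 : s(u', v') = eb
              · have hnob : eb ∉ q'.edges := by
                  have hnd := hip.isTrail.edges_nodup
                  rw [Walk.edges_cons, List.nodup_cons, h2] at hnd
                  exact hnd.1
                have hamem' : ea ∈ q'.edges := by
                  rw [Walk.edges_cons, List.mem_cons] at hamem
                  rcases hamem with h | h
                  · exact absurd (h.trans h2) hne
                  · exact h
                rw [hebq, Sym2.eq_iff] at h2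
                rcases h2 with ⟨h2a, h2b⟩ | ⟨rfl, -⟩
                · rcases lemA2 v' w' q' hnob hamem' with h | h
                  · rw [h2b] at h; exact absurd h.symm hnr1b2
                  · rw [h2b] at h; exact absurd h.symm hnr2b2
                · exact Or.inr (Reachable.refl _)
              · have hGadj : G.Adj u' v' := by
                  rw [hG]
                  simp only [deleteEdges_adj, Set.mem_insert_iff, Set.mem_singleton_iff]
                  exact ⟨hadj, by rintro (h | h); exacts [h1 h, h2 h]⟩
                have hip' : q'.IsPath := ((Walk.cons_isPath_iff _ _).1 hip).1
                have hamem' : ea ∈ q'.edges := by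
                  rw [Walk.edges_cons, List.mem_cons] at hamem
                  rcases hamem with h | h
                  · exact absurd h.symm h1
                  · exact h
                have hbmem' : eb ∈ q'.edges := by
                  rw [Walk.edges_cons, List.mem_cons] at hbmem
                  rcases hbmem with h | h
                  · exact absurd h.symm h2
                  · exact h
                rcases ih hip' hamem' hbmem' with h | h
                · exact Or.inl (hGadj.reachable.trans h)
                · exact Or.inr (hGadj.reachable.trans h)
        obtain ⟨c, cx, pw, hcent, hpth, he1, he2⟩ := hat
        have hcw : weight T c ≤ weight T a2 := hcent a2
        rcases claim c cx pw hpth he1 he2 with hcr | hcr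
        · -- c in X
          have hu2 : c ∉ dA2.supp := by
            rw [ConnectedComponent.mem_supp_iff, hdA2, ConnectedComponent.eq]
            intro h'
            exact hbrA ((hcr.mono hGGe).symm.trans h')
          have hge := weight_ge T c Ge hGeT dA2 hu2
          rw [hval2] at hge
          omega
        · -- c in Z
          have hu1 : c ∉ dB1.supp := by
            rw [ConnectedComponent.mem_supp_iff, hdB1, ConnectedComponent.eq]
            intro h'
            exact hbrB (h'.symm.trans (hcr.mono hGGb))
          have hge := weight_ge T c Gb hGbT dB1 hu1
          rw [hvalB1] at hge
          omega
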